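/- If a ∈ A_C satisfies a ∈ t·ℂ[[t]], then for every n ≥ 1, ‖a^n‖_C ≤ ‖a‖_C^n / n!. -/

import Mathlib

open PowerSeries

/-- The norm `‖a‖_C = ∑_{j≥0} |a_j| C^j / j!` on formal power series. -/
noncomputable def pNorm (C : ℝ) (a : PowerSeries ℂ) : ℝ :=
  ∑' j : ℕ, ‖coeff j a‖ * C ^ j / (Nat.factorial j : ℝ)

/-- Membership in `A_C`: the series `∑ |a_j| C^j / j!` converges. -/
def MemAC (C : ℝ) (a : PowerSeries ℂ) : Prop :=
  Summable fun j : ℕ => ‖coeff j a‖ * C ^ j / (Nat.factorial j : ℝ)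

lemma aux_fact_ineq (n k l : ℕ) (hk : 1 ≤ k) (hl : n ≤ l) :
    (n + 1) * (Nat.factorial k * Nat.factorial l) ≤ Nat.factorial (k + l) := by
  have h1 : (l + 1).choose l ≤ (l + k).choose l := Nat.choose_le_choose l (by omega)
  rw [Nat.choose_succ_self_right] at h1
  have h1' : n + 1 ≤ (k + l).choose l := by
    rw [Nat.add_comm k l]
    omega
  have h2 := Nat.add_choose_mul_factorial_mul_factorial k l
  calc (n + 1) * (Nat.factorial k * Nat.factorial l)
      ≤ (k + l).choose l * (Nat.factorial k * Nat.factorial l) :=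
        Nat.mul_le_mul_right _ h1'
    _ = Nat.factorial (k + l) := by rw [← mul_assoc, h2]

/-- If `a ∈ A_C` has vanishing constant coefficient, then for every `n ≥ 1`,
`‖a^n‖_C ≤ ‖a‖_C^n / n!`. -/
theorem stmt_3 (C : ℝ) (hC : 0 < C) (a : PowerSeries ℂ)
    (ha : MemAC C a) (h0 : coeff 0 a = 0) :
    ∀ n : ℕ, 1 ≤ n →
      MemAC C (a ^ n) ∧ pNorm C (a ^ n) ≤ (pNorm C a) ^ n / (Nat.factorial n : ℝ) := by
  have hvan : ∀ m : ℕ, ∀ k < m, coeff k (a ^ m) = 0 := by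
    intro m
    induction m with
    | zero => omega
    | succ m ih =>
      intro k hk
      rw [pow_succ, coeff_mul]
      apply Finset.sum_eq_zero
      rintro ⟨i, j⟩ hij
      rw [Finset.HasAntidiagonal.mem_antidiagonal] at hij
      rcases Nat.eq_zero_or_pos j with hj | hj
      · subst hj; rw [h0, mul_zero]
      · rw [ih i (by omega), zero_mul]
  set f : ℕ → ℝ := fun j => ‖coeff j a‖ * C ^ j / (Nat.factorial j : ℝ) with hfdef
  have hf0 : ∀ j, 0 ≤ f j := fun j => by positivity
  have hPnn : 0 ≤ pNorm C a := tsum_nonneg hf0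
  intro n hn
  induction n with
  | zero => omega
  | succ n ih =>
    rcases Nat.eq_zero_or_pos n with rfl | hn'
    · refine ⟨by simpa [MemAC] using ha, ?_⟩
      simp [pNorm]
    · obtain ⟨hsum, hb⟩ := ih hn'
      set g : ℕ → ℝ := fun j => ‖coeff j (a ^ n)‖ * C ^ j / (Nat.factorial j : ℝ)
        with hgdef
      have hg0 : ∀ j, 0 ≤ g j := fun j => by positivity
      -- termwise bound
      have hterm : ∀ k l : ℕ,
          ‖coeff k a‖ * ‖coeff l (a ^ n)‖ * C ^ (k + l) /
            (Nat.factorial (k + l) : ℝ) ≤ (1 / (n + 1 : ℝ)) * (f k * g l) := by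
        intro k l
        rcases Nat.eq_zero_or_pos k with rfl | hk
        · rw [h0]
          simp only [norm_zero, zero_mul, zero_div]
          positivity
        rcases Nat.lt_or_ge l n with hl | hl
        · rw [hvan n l hl]
          simp only [norm_zero, mul_zero, zero_mul, zero_div]
          positivity
        · have hfac : ((n + 1 : ℕ) * (Nat.factorial k * Nat.factorial l) : ℝ) ≤
              (Nat.factorial (k + l) : ℝ) := by
            exact_mod_cast aux_fact_ineq n k l hk hl
          have hpos : (0:ℝ) < (n + 1 : ℕ) * (Nat.factorial k * Nat.factorial l) := by
            positivity
          calc ‖coeff k a‖ * ‖coeff l (a ^ n)‖ * C ^ (k + l) /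
                (Nat.factorial (k + l) : ℝ)
              ≤ ‖coeff k a‖ * ‖coeff l (a ^ n)‖ * C ^ (k + l) /
                ((n + 1 : ℕ) * (Nat.factorial k * Nat.factorial l) : ℝ) := by
                gcongr
            _ = (1 / (n + 1 : ℝ)) * (f k * g l) := by
                simp only [hfdef, hgdef]
                rw [pow_add]
                have h1 : (Nat.factorial k : ℝ) ≠ 0 := by positivity
                have h2 : (Nat.factorial l : ℝ) ≠ 0 := by positivity
                have h3 : ((n:ℝ) + 1) ≠ 0 := by positivity
                push_cast
                field_simp
      -- pointwise bound on coefficients of a^(n+1)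
      have key : ∀ j : ℕ,
          ‖coeff j (a ^ (n + 1))‖ * C ^ j / (Nat.factorial j : ℝ) ≤
            (1 / (n + 1 : ℝ)) * ∑ kl ∈ Finset.HasAntidiagonal.antidiagonal j, f kl.1 * g kl.2 := by
        intro j
        have hco : coeff j (a ^ (n + 1)) =
            ∑ kl ∈ Finset.HasAntidiagonal.antidiagonal j, coeff kl.1 a * coeff kl.2 (a ^ n) := by
          rw [pow_succ', coeff_mul]
        calc ‖coeff j (a ^ (n + 1))‖ * C ^ j / (Nat.factorial j : ℝ)
            ≤ (∑ kl ∈ Finset.HasAntidiagonal.antidiagonal j,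
                ‖coeff kl.1 a‖ * ‖coeff kl.2 (a ^ n)‖) * C ^ j /
                (Nat.factorial j : ℝ) := by
              gcongr
              rw [hco]
              refine le_trans (norm_sum_le _ _) (le_of_eq ?_)
              exact Finset.sum_congr rfl fun kl _ => norm_mul _ _
          _ = ∑ kl ∈ Finset.HasAntidiagonal.antidiagonal j,
                ‖coeff kl.1 a‖ * ‖coeff kl.2 (a ^ n)‖ *
                C ^ (kl.1 + kl.2) / (Nat.factorial (kl.1 + kl.2) : ℝ) := by
              rw [Finset.sum_mul, Finset.sum_div]
              refine Finset.sum_congr rfl fun kl hkl => ?_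
              rw [Finset.HasAntidiagonal.mem_antidiagonal] at hkl
              rw [hkl]
          _ ≤ ∑ kl ∈ Finset.HasAntidiagonal.antidiagonal j, (1 / (n + 1 : ℝ)) * (f kl.1 * g kl.2) :=
              Finset.sum_le_sum fun kl _ => hterm kl.1 kl.2
          _ = (1 / (n + 1 : ℝ)) * ∑ kl ∈ Finset.HasAntidiagonal.antidiagonal j, f kl.1 * g kl.2 := by
              rw [Finset.mul_sum]
      -- Summability of the Cauchy product
      have hfn : Summable fun j => ‖f j‖ := by
        simpa only [Real.norm_of_nonneg (hf0 _)] using (show Summable f from ha)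
      have hgn : Summable fun j => ‖g j‖ := by
        simpa only [Real.norm_of_nonneg (hg0 _)] using (show Summable g from hsum)
      have hSnorm := summable_norm_sum_mul_antidiagonal_of_summable_norm hfn hgn
      have hS : Summable fun j => ∑ kl ∈ Finset.HasAntidiagonal.antidiagonal j, f kl.1 * g kl.2 :=
        hSnorm.of_norm
      have hS' : Summable fun j => (1 / (n + 1 : ℝ)) *
          ∑ kl ∈ Finset.HasAntidiagonal.antidiagonal j, f kl.1 * g kl.2 := hS.mul_left _
      have hmem : MemAC C (a ^ (n + 1)) := by
        refine Summable.of_nonneg_of_le (fun j => by positivity) key hS'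
      refine ⟨hmem, ?_⟩
      have htsum : ∑' j, ∑ kl ∈ Finset.HasAntidiagonal.antidiagonal j, f kl.1 * g kl.2 =
          pNorm C a * pNorm C (a ^ n) :=
        (tsum_mul_tsum_eq_tsum_sum_antidiagonal_of_summable_norm hfn hgn).symm
      calc pNorm C (a ^ (n + 1))
          ≤ ∑' j, (1 / (n + 1 : ℝ)) * ∑ kl ∈ Finset.HasAntidiagonal.antidiagonal j, f kl.1 * g kl.2 :=
            Summable.tsum_le_tsum key hmem hS'
        _ = (1 / (n + 1 : ℝ)) * (pNorm C a * pNorm C (a ^ n)) := by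
            rw [tsum_mul_left, htsum]
        _ ≤ (1 / (n + 1 : ℝ)) * (pNorm C a * (pNorm C a ^ n / (Nat.factorial n : ℝ))) := by
            gcongr
        _ = pNorm C a ^ (n + 1) / (Nat.factorial (n + 1) : ℝ) := by
            rw [Nat.factorial_succ]
            push_cast
            rw [pow_succ]
            have : ((n:ℝ) + 1) ≠ 0 := by positivity
            have h2 : (Nat.factorial n : ℝ) ≠ 0 := by positivity
            field_simp
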